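/- For each n ≥ 3, there exists a short exact sequence of kV₄-modules 0 → W₃^{⊕(n+1)} → k^{⊕n} ⊕ kV₄^{⊕(n+1)} → W_{2n+1} → 0; consequently ppdim(W_{2n+1}) ≤ 2. -/

import Mathlib

open Multiplicative

/-! ## The Klein four-group and its group algebra -/

/-- The Klein four-group `V₄ = ⟨σ, τ⟩`. -/
abbrev V4 : Type := Multiplicative (ZMod 2) × Multiplicative (ZMod 2)

/-- The group algebra `kV₄`. -/
abbrev kV4 (k : Type) [Field k] : Type := MonoidAlgebra k V4

/-- The generator `σ` of `V₄`. -/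
def sigma4 : V4 := (ofAdd 1, 1)

/-- The generator `τ` of `V₄`. -/
def tau4 : V4 := (1, ofAdd 1)

/-- The element `a = σ + 1` of `kV₄` (in characteristic 2, `σ + 1 = σ - 1`). -/
noncomputable def aElt (k : Type) [Field k] : kV4 k := MonoidAlgebra.of k V4 sigma4 + 1

/-- The element `b = τ + 1` of `kV₄`. -/
noncomputable def bElt (k : Type) [Field k] : kV4 k := MonoidAlgebra.of k V4 tau4 + 1

/-! ## Building representations of `V₄` -/

/-- A monoid hom out of `Multiplicative (ZMod 2)` determined by an involution. -/
noncomputable def involHom {M : Type} [Monoid M] (S : M) (hS : S * S = 1) :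
    Multiplicative (ZMod 2) →* M where
  toFun g := S ^ (toAdd g).val
  map_one' := by simp
  map_mul' x y := by
    have h2 : S ^ 2 = 1 := by rwa [pow_two]
    have key : ∀ m : ℕ, S ^ (m % 2) = S ^ m := by
      intro m
      conv_rhs => rw [← Nat.div_add_mod m 2]
      rw [pow_add, pow_mul, h2, one_pow, one_mul]
    show S ^ (toAdd (x * y)).val = S ^ (toAdd x).val * S ^ (toAdd y).val
    rw [toAdd_mul, ZMod.val_add, key, pow_add]

/-- The representation of `V₄` determined by two commuting involutions `S` (the action
of `σ`) and `T` (the action of `τ`). -/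
noncomputable def kleinRep (k : Type) [Field k] {V : Type} [AddCommGroup V] [Module k V]
    (S T : Module.End k V) (hS : S * S = 1) (hT : T * T = 1) (hST : S * T = T * S) :
    Representation k V4 V :=
  MonoidHom.noncommCoprod (involHom S hS) (involHom T hT)
    (fun _ _ => Commute.pow_pow (show Commute S T from hST) _ _)

section Pair

variable (k : Type) [Field k]

/-- The endomorphism `(u, v) ↦ (0, f u)` of `(I → k) × (J → k)`. -/
noncomputable def auxEnd {I J : Type} (f : (I → k) →ₗ[k] (J → k)) :
    Module.End k ((I → k) × (J → k)) :=
  (LinearMap.inr k (I → k) (J → k)).comp (f.comp (LinearMap.fst k (I → k) (J → k)))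

lemma auxEnd_mul {I J : Type} (f g : (I → k) →ₗ[k] (J → k)) :
    auxEnd k f * auxEnd k g = 0 := by
  apply LinearMap.ext
  intro x
  simp [auxEnd, Module.End.mul_apply]

lemma end_add_self {V : Type} [AddCommGroup V] [Module k V] [CharP k 2]
    (A : Module.End k V) : A + A = 0 := by
  rw [← two_smul k A]
  have h2 : (2 : k) = 0 := by exact_mod_cast CharP.cast_eq_zero k 2
  rw [h2, zero_smul]

lemma one_add_sq [CharP k 2] {V : Type} [AddCommGroup V] [Module k V]
    (A : Module.End k V) (hA : A * A = 0) : (1 + A) * (1 + A) = 1 := by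
  have h : (1 + A) * (1 + A) = 1 + (A + A) + A * A := by noncomm_ring
  rw [h, end_add_self, hA, add_zero, add_zero]

lemma one_add_comm {V : Type} [AddCommGroup V] [Module k V]
    (A B : Module.End k V) (hAB : A * B = 0) (hBA : B * A = 0) :
    (1 + A) * (1 + B) = (1 + B) * (1 + A) := by
  have h1 : (1 + A) * (1 + B) = 1 + A + B + A * B := by noncomm_ring
  have h2 : (1 + B) * (1 + A) = 1 + A + B + B * A := by noncomm_ring
  rw [h1, h2, hAB, hBA]

/-- The representation of `V₄` on `(I → k) × (J → k)` (`I` indexing the `u`-basis and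
`J` the `v`-basis) on which `a` acts by `(u, v) ↦ (0, f u)` and `b` acts by
`(u, v) ↦ (0, g u)`; equivalently `σ = 1 + a`, `τ = 1 + b`. -/
noncomputable def pairRep [CharP k 2] (I J : Type) (f g : (I → k) →ₗ[k] (J → k)) :
    Representation k V4 ((I → k) × (J → k)) :=
  kleinRep k (1 + auxEnd k f) (1 + auxEnd k g)
    (one_add_sq k _ (auxEnd_mul k f f)) (one_add_sq k _ (auxEnd_mul k g g))
    (one_add_comm k _ _ (auxEnd_mul k f g) (auxEnd_mul k g f))

end Pair

/-! ## The indecomposable `kV₄`-modules -/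

section Modules

variable (k : Type) [Field k] [CharP k 2]

/-- `a`-action for `M_{2n+1}`: `a • u_i = v_{i-1}` for `1 ≤ i ≤ n`; here `u_{i+1}` is
indexed by `i : Fin n` and `v_j` by `j : Fin (n+1)`. -/
noncomputable def MaMap (n : ℕ) : (Fin n → k) →ₗ[k] (Fin (n + 1) → k) :=
  LinearMap.pi fun j =>
    if h : (j : ℕ) < n then LinearMap.proj (⟨(j : ℕ), h⟩ : Fin n) else 0

/-- `b`-action for `M_{2n+1}`: `b • u_i = v_i` for `1 ≤ i ≤ n`. -/
noncomputable def MbMap (n : ℕ) : (Fin n → k) →ₗ[k] (Fin (n + 1) → k) :=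
  LinearMap.pi fun j =>
    if _ : (j : ℕ) = 0 then 0
    else LinearMap.proj (⟨(j : ℕ) - 1, by have := j.isLt; omega⟩ : Fin n)

/-- The representation `M_{2n+1}`. -/
noncomputable def MRep (n : ℕ) : Representation k V4 ((Fin n → k) × (Fin (n + 1) → k)) :=
  pairRep k (Fin n) (Fin (n + 1)) (MaMap k n) (MbMap k n)

/-- The `kV₄`-module `M_{2n+1}`. -/
@[reducible] noncomputable def Mmod (n : ℕ) := (MRep k n).asModule

/-- `a`-action for `W_{2n+1}`: `a • u_i = v_i` for `1 ≤ i ≤ n`, `a • u_0 = 0`; here `u_i`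
is indexed by `i : Fin (n+1)` and `v_{j+1}` by `j : Fin n`. -/
noncomputable def WaMap (n : ℕ) : (Fin (n + 1) → k) →ₗ[k] (Fin n → k) :=
  LinearMap.pi fun j =>
    LinearMap.proj (⟨(j : ℕ) + 1, by have := j.isLt; omega⟩ : Fin (n + 1))

/-- `b`-action for `W_{2n+1}`: `b • u_i = v_{i+1}` for `0 ≤ i ≤ n-1`, `b • u_n = 0`. -/
noncomputable def WbMap (n : ℕ) : (Fin (n + 1) → k) →ₗ[k] (Fin n → k) :=
  LinearMap.pi fun j =>
    LinearMap.proj (⟨(j : ℕ), by have := j.isLt; omega⟩ : Fin (n + 1))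

/-- The representation `W_{2n+1}`. -/
noncomputable def WRep (n : ℕ) : Representation k V4 ((Fin (n + 1) → k) × (Fin n → k)) :=
  pairRep k (Fin (n + 1)) (Fin n) (WaMap k n) (WbMap k n)

/-- The `kV₄`-module `W_{2n+1}`. -/
@[reducible] noncomputable def Wmod (n : ℕ) := (WRep k n).asModule

/-- `b`-action for `E_{f,n}` with `f ≠ ∞`, where `m = n·deg f` and `α` is the list of lower
coefficients of `f^n`: `b • u_i = v_{i+1}` for `i ≤ m-2` and `b • u_{m-1} = Σ α_i v_i`. -/
noncomputable def EbMap (m : ℕ) (α : Fin m → k) : (Fin m → k) →ₗ[k] (Fin m → k) :=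
  LinearMap.pi fun j =>
    (if _ : (j : ℕ) = 0 then 0
     else LinearMap.proj (⟨(j : ℕ) - 1, by have := j.isLt; omega⟩ : Fin m))
    + α j • LinearMap.proj (⟨m - 1, by have := j.isLt; omega⟩ : Fin m)

/-- The representation `E_{f,n}` (for `f ≠ ∞`), where `a • u_i = v_i`. -/
noncomputable def ERep (m : ℕ) (α : Fin m → k) : Representation k V4 ((Fin m → k) × (Fin m → k)) :=
  pairRep k (Fin m) (Fin m) LinearMap.id (EbMap k m α)

/-- The `kV₄`-module `E_{f,n}` (for `f ≠ ∞`), presented by the coefficient vector `α` of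
`f^n` below its leading term, with `m = n·deg f`. -/
@[reducible] noncomputable def Emod (m : ℕ) (α : Fin m → k) := (ERep k m α).asModule

/-- `a`-action for `E_{∞,n}`: `a • u_i = v_{i-1}` for `1 ≤ i ≤ n-1`, `a • u_0 = 0`. -/
noncomputable def EinfaMap (n : ℕ) : (Fin n → k) →ₗ[k] (Fin n → k) :=
  LinearMap.pi fun j =>
    if h : (j : ℕ) + 1 < n then LinearMap.proj (⟨(j : ℕ) + 1, h⟩ : Fin n) else 0

/-- The representation `E_{∞,n}`, where `b • u_i = v_i`. -/
noncomputable def EinfRep (n : ℕ) : Representation k V4 ((Fin n → k) × (Fin n → k)) :=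
  pairRep k (Fin n) (Fin n) (EinfaMap k n) LinearMap.id

/-- The `kV₄`-module `E_{∞,n}`. -/
@[reducible] noncomputable def Einfmod (n : ℕ) := (EinfRep k n).asModule

/-- The trivial `kV₄`-module `k`. -/
@[reducible] noncomputable def trivMod := (Representation.trivial k (G := V4) (V := k)).asModule

/-- The `kV₄`-module `E_t = E_{t,1}`. -/
@[reducible] noncomputable def EtMod := Emod k 1 0

/-- The `kV₄`-module `E_{t+1} = E_{t+1,1}`. -/
@[reducible] noncomputable def Et1Mod := Emod k 1 1

/-- The `kV₄`-module `E_∞ = E_{∞,1}`. -/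
@[reducible] noncomputable def EinfMod := Einfmod k 1

end Modules

/-! ## Permutation modules, resolutions and the permutation dimension -/

section Perm

variable (k : Type) [Field k]

/-- A `kV₄`-module is a permutation module if it is isomorphic to `k[X]` for some finite
`V₄`-set `X` (equivalently, it admits a finite `k`-basis permuted by `V₄`). -/
def IsPermMod (M : Type) [AddCommMonoid M] [Module (kV4 k) M] : Prop :=
  ∃ (ι : Type) (_ : Fintype ι) (act : MulAction V4 ι),
    Nonempty (M ≃ₗ[kV4 k] (@Representation.ofMulAction k _ V4 _ ι act).asModule)

/-- A permutation resolution `0 → P_n → ⋯ → P_1 → P_0 → M → 0` of length at most `n`: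
an exact sequence of `kV₄`-modules in which every `P_i` is a permutation module and
`P_i = 0` for `i > n`. -/
structure PermRes (M : Type) [AddCommMonoid M] [Module (kV4 k) M] (n : ℕ) where
  P : ℕ → Type
  [acm : ∀ i, AddCommMonoid (P i)]
  [mod : ∀ i, Module (kV4 k) (P i)]
  d : ∀ i, P (i + 1) →ₗ[kV4 k] P i
  ε : P 0 →ₗ[kV4 k] M
  perm : ∀ i, IsPermMod k (P i)
  surj : Function.Surjective ε
  exact_zero : LinearMap.ker ε = LinearMap.range (d 0)
  exact_succ : ∀ i, LinearMap.ker (d i) = LinearMap.range (d (i + 1))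
  bounded : ∀ i, n < i → ∀ x : P i, x = 0

/-- The permutation dimension of a `kV₄`-module: the least length of a permutation
resolution. -/
noncomputable def ppdim (M : Type) [AddCommMonoid M] [Module (kV4 k) M] : ℕ :=
  sInf {n : ℕ | Nonempty (PermRes k M n)}

/-- `SES k A B C` asserts the existence of a short exact sequence
`0 → A → B → C → 0` of `kV₄`-modules. -/
def SES (A B C : Type) [AddCommMonoid A] [AddCommMonoid B] [AddCommMonoid C]
    [Module (kV4 k) A] [Module (kV4 k) B] [Module (kV4 k) C] : Prop :=
  ∃ (f : A →ₗ[kV4 k] B) (g : B →ₗ[kV4 k] C),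
    Function.Injective f ∧ Function.Surjective g ∧ LinearMap.range f = LinearMap.ker g

end Perm

/-- A nonzero module is indecomposable if it is not the (internal) direct sum of two
nonzero submodules. -/
def IsIndecomposable (R M : Type) [Ring R] [AddCommMonoid M] [Module R M] : Prop :=
  Nontrivial M ∧ ∀ N₁ N₂ : Submodule R M, IsCompl N₁ N₂ → N₁ = ⊥ ∨ N₂ = ⊥

/-- A `kV₄`-module is projective-free if it has no direct summand isomorphic to the
regular module `kV₄`. -/
def IsProjFree (k : Type) [Field k] (M : Type) [AddCommMonoid M] [Module (kV4 k) M] : Prop :=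
  ¬ ∃ (N N' : Submodule (kV4 k) M), IsCompl N N' ∧ Nonempty (N ≃ₗ[kV4 k] kV4 k)


/-! ## Auxiliary infrastructure -/

section Infra

variable {k : Type} [Field k]

lemma v4_cases (g : V4) : g = 1 ∨ g = sigma4 ∨ g = tau4 ∨ g = sigma4 * tau4 := by
  revert g; decide

lemma of_smul_asModule {V : Type} [AddCommGroup V] [Module k V]
    (ρ : Representation k V4 V) (g : V4) (x : ρ.asModule) :
    MonoidAlgebra.of k V4 g • x = ρ g (ρ.asModuleEquiv x) := by
  show ρ.asAlgebraHom (MonoidAlgebra.of k V4 g) x = _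
  rw [Representation.asAlgebraHom_of]
  rfl

lemma algebraMap_smul_asModule {V : Type} [AddCommGroup V] [Module k V]
    (ρ : Representation k V4 V) (c : k) (x : ρ.asModule) :
    algebraMap k (kV4 k) c • x = ρ.asModuleEquiv.symm (c • ρ.asModuleEquiv x) := by
  show ρ.asAlgebraHom (algebraMap k (kV4 k) c) x = _
  rw [AlgHom.commutes]
  rfl

/-- To check `kV₄`-linearity of an additive map it suffices to check compatibility
with scalars from `k` and equivariance for `σ` and `τ`. -/
lemma smul_criterion {M N : Type} [AddCommMonoid M] [AddCommMonoid N]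
    [Module (kV4 k) M] [Module (kV4 k) N] (f : M →+ N)
    (hk : ∀ (c : k) (x : M), f (algebraMap k (kV4 k) c • x) = algebraMap k (kV4 k) c • f x)
    (hσ : ∀ x : M, f (MonoidAlgebra.of k V4 sigma4 • x) = MonoidAlgebra.of k V4 sigma4 • f x)
    (hτ : ∀ x : M, f (MonoidAlgebra.of k V4 tau4 • x) = MonoidAlgebra.of k V4 tau4 • f x)
    (r : kV4 k) (x : M) : f (r • x) = r • f x := by
  induction r using MonoidAlgebra.induction_on generalizing x with
  | of g =>
    have hmul : ∀ r s : kV4 k, (∀ y : M, f (r • y) = r • f y) →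
        (∀ y : M, f (s • y) = s • f y) → ∀ y : M, f ((r * s) • y) = (r * s) • f y := by
      intro r s hr hs y
      rw [mul_smul, mul_smul, hr, hs]
    have h1 : ∀ y : M, f ((1 : kV4 k) • y) = (1 : kV4 k) • f y := by
      intro y; rw [one_smul, one_smul]
    rcases v4_cases g with h | h | h | h <;> subst h
    · have := h1 x
      rwa [show (1 : kV4 k) = MonoidAlgebra.of k V4 1 from (map_one _).symm] at this
    · exact hσ x
    · exact hτ x
    · rw [map_mul]
      exact hmul _ _ hσ hτ x
  | add r s hr hs => rw [add_smul, add_smul, map_add, hr, hs]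
  | smul c r hr =>
    rw [show (c • r) = algebraMap k (kV4 k) c * r from Algebra.smul_def c r, mul_smul,
      mul_smul, hk, hr]

/-- Build a `kV₄`-linear map from an additive map compatible with `k`-scalars and
equivariant for the generators `σ` and `τ`. -/
noncomputable def mkHom {M N : Type} [AddCommMonoid M] [AddCommMonoid N]
    [Module (kV4 k) M] [Module (kV4 k) N] (f : M →+ N)
    (hk : ∀ (c : k) (x : M), f (algebraMap k (kV4 k) c • x) = algebraMap k (kV4 k) c • f x)
    (hσ : ∀ x : M, f (MonoidAlgebra.of k V4 sigma4 • x) = MonoidAlgebra.of k V4 sigma4 • f x)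
    (hτ : ∀ x : M, f (MonoidAlgebra.of k V4 tau4 • x) = MonoidAlgebra.of k V4 tau4 • f x) :
    M →ₗ[kV4 k] N :=
  { toFun := f
    map_add' := f.map_add
    map_smul' := fun r x => smul_criterion f hk hσ hτ r x }

variable [CharP k 2]

lemma pairRep_sigma {I J : Type} (f g : (I → k) →ₗ[k] (J → k)) :
    pairRep k I J f g sigma4 = 1 + auxEnd k f := by
  show kleinRep k _ _ _ _ _ sigma4 = _
  simp only [kleinRep, MonoidHom.noncommCoprod_apply, sigma4, involHom]
  show ((1 + auxEnd k f) ^ (toAdd (ofAdd (1 : ZMod 2))).val) *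
    ((1 + auxEnd k g) ^ (toAdd (1 : Multiplicative (ZMod 2))).val) = _
  norm_num [toAdd_ofAdd, ZMod.val_one]

lemma pairRep_tau {I J : Type} (f g : (I → k) →ₗ[k] (J → k)) :
    pairRep k I J f g tau4 = 1 + auxEnd k g := by
  show kleinRep k _ _ _ _ _ tau4 = _
  simp only [kleinRep, MonoidHom.noncommCoprod_apply, tau4, involHom]
  show ((1 + auxEnd k f) ^ (toAdd (1 : Multiplicative (ZMod 2))).val) *
    ((1 + auxEnd k g) ^ (toAdd (ofAdd (1 : ZMod 2))).val) = _
  norm_num [toAdd_ofAdd, ZMod.val_one]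

lemma pairRep_sigma_apply {I J : Type} (f g : (I → k) →ₗ[k] (J → k))
    (x : (I → k) × (J → k)) :
    pairRep k I J f g sigma4 x = (x.1, x.2 + f x.1) := by
  rw [pairRep_sigma]
  simp only [LinearMap.add_apply, Module.End.one_apply, auxEnd]
  ext <;> simp

lemma pairRep_tau_apply {I J : Type} (f g : (I → k) →ₗ[k] (J → k))
    (x : (I → k) × (J → k)) :
    pairRep k I J f g tau4 x = (x.1, x.2 + g x.1) := by
  rw [pairRep_tau]
  simp only [LinearMap.add_apply, Module.End.one_apply, auxEnd]
  ext <;> simp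

end Infra

section KV4Identities

variable {k : Type} [Field k]

lemma sigma4_sq : sigma4 * sigma4 = 1 := by decide
lemma tau4_sq : tau4 * tau4 = 1 := by decide
lemma sigma4_inv : sigma4⁻¹ = sigma4 := by decide
lemma tau4_inv : tau4⁻¹ = tau4 := by decide

/-- Shorthand for the image of `σ` in `kV₄`. -/
noncomputable def sK (k : Type) [Field k] : kV4 k := MonoidAlgebra.of k V4 sigma4
/-- Shorthand for the image of `τ` in `kV₄`. -/
noncomputable def tK (k : Type) [Field k] : kV4 k := MonoidAlgebra.of k V4 tau4

lemma sK_sq : sK k * sK k = 1 := by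
  rw [sK, ← map_mul, sigma4_sq, map_one]

lemma tK_sq : tK k * tK k = 1 := by
  rw [tK, ← map_mul, tau4_sq, map_one]

variable [CharP k 2]

lemma two_eq_zero_kV4 : (2 : kV4 k) = 0 := by
  have h : (2 : k) = 0 := by exact_mod_cast CharP.cast_eq_zero k 2
  calc (2 : kV4 k) = algebraMap k (kV4 k) 2 := (map_ofNat _ 2).symm
  _ = 0 := by rw [h, map_zero]

lemma aElt_eq : aElt k = sK k + 1 := rfl
lemma bElt_eq : bElt k = tK k + 1 := rfl

lemma a_sq : aElt k * aElt k = 0 := by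
  rw [aElt_eq]
  linear_combination (sK_sq (k := k)) + (sK k + 1) * (two_eq_zero_kV4 (k := k))

lemma b_sq : bElt k * bElt k = 0 := by
  rw [bElt_eq]
  linear_combination (tK_sq (k := k)) + (tK k + 1) * (two_eq_zero_kV4 (k := k))

lemma sK_mul_a : sK k * aElt k = aElt k := by
  rw [aElt_eq]; linear_combination (sK_sq (k := k))

lemma sK_mul_b : sK k * bElt k = bElt k + aElt k * bElt k := by
  rw [aElt_eq, bElt_eq]
  linear_combination (-(tK k + 1)) * (two_eq_zero_kV4 (k := k))

lemma sK_mul_ab : sK k * (aElt k * bElt k) = aElt k * bElt k := by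
  rw [aElt_eq, bElt_eq]
  linear_combination (tK k + 1) * (sK_sq (k := k))

lemma tK_mul_b : tK k * bElt k = bElt k := by
  rw [bElt_eq]; linear_combination (tK_sq (k := k))

lemma tK_mul_a : tK k * aElt k = aElt k + aElt k * bElt k := by
  rw [aElt_eq, bElt_eq]
  linear_combination (-(sK k + 1)) * (two_eq_zero_kV4 (k := k))

lemma tK_mul_ab : tK k * (aElt k * bElt k) = aElt k * bElt k := by
  rw [aElt_eq, bElt_eq]
  linear_combination (sK k + 1) * (tK_sq (k := k))

end KV4Identities

noncomputable instance kV4CoeFun {k : Type} [Field k] : CoeFun (kV4 k) (fun _ => V4 → k) :=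
  ⟨fun x => x.coeff⟩

section Functionals

variable {k : Type} [Field k]

lemma kv4_add_apply (x y : kV4 k) (g : V4) : (x + y) g = x g + y g := rfl
lemma kv4_smul_apply (c : k) (x : kV4 k) (g : V4) : (c • x) g = c * x g := rfl

/-- Sum of all four coefficients (the augmentation). -/
noncomputable def sfun (x : kV4 k) : k := x 1 + x sigma4 + x tau4 + x (sigma4 * tau4)
/-- Coefficient functional detecting `a`. -/
noncomputable def tfun (x : kV4 k) : k := x sigma4 + x (sigma4 * tau4)
/-- Coefficient functional detecting `b`. -/
noncomputable def wfun (x : kV4 k) : k := x tau4 + x (sigma4 * tau4)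
/-- Coefficient functional detecting `ab`. -/
noncomputable def qfun (x : kV4 k) : k := x (sigma4 * tau4)

lemma sfun_add (x y : kV4 k) : sfun (x + y) = sfun x + sfun y := by
  simp [sfun, kv4_add_apply]; ring
lemma tfun_add (x y : kV4 k) : tfun (x + y) = tfun x + tfun y := by
  simp [tfun, kv4_add_apply]; ring
lemma wfun_add (x y : kV4 k) : wfun (x + y) = wfun x + wfun y := by
  simp [wfun, kv4_add_apply]; ring
lemma qfun_add (x y : kV4 k) : qfun (x + y) = qfun x + qfun y := by
  simp [qfun, kv4_add_apply]

lemma single_mul_apply' (g : V4) (c : k) (x : kV4 k) (h : V4) :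
    (MonoidAlgebra.single g c * x) h = c * x (g⁻¹ * h) :=
  MonoidAlgebra.coeff_single_mul_apply x c g h

lemma algebraMap_mul_apply (c : k) (x : kV4 k) (h : V4) :
    (algebraMap k (kV4 k) c * x) h = c * x h := by
  rw [show algebraMap k (kV4 k) c = MonoidAlgebra.single 1 c from rfl,
    single_mul_apply' 1 c x h, inv_one, one_mul]

lemma sfun_algebraMap_mul (c : k) (x : kV4 k) : sfun (algebraMap k (kV4 k) c * x) = c * sfun x := by
  simp [sfun, algebraMap_mul_apply]; ring
lemma tfun_algebraMap_mul (c : k) (x : kV4 k) : tfun (algebraMap k (kV4 k) c * x) = c * tfun x := by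
  simp [tfun, algebraMap_mul_apply]; ring
lemma wfun_algebraMap_mul (c : k) (x : kV4 k) : wfun (algebraMap k (kV4 k) c * x) = c * wfun x := by
  simp [wfun, algebraMap_mul_apply]; ring
lemma qfun_algebraMap_mul (c : k) (x : kV4 k) : qfun (algebraMap k (kV4 k) c * x) = c * qfun x := by
  simp [qfun, algebraMap_mul_apply]

lemma sK_mul_apply (x : kV4 k) (h : V4) : (sK k * x) h = x (sigma4 * h) := by
  rw [sK, MonoidAlgebra.of_apply, single_mul_apply' sigma4 1 x h, sigma4_inv, one_mul]

lemma tK_mul_apply (x : kV4 k) (h : V4) : (tK k * x) h = x (tau4 * h) := by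
  rw [tK, MonoidAlgebra.of_apply, single_mul_apply' tau4 1 x h, tau4_inv, one_mul]

lemma sfun_sK_mul (x : kV4 k) : sfun (sK k * x) = sfun x := by
  simp only [sfun, sK_mul_apply]
  rw [show sigma4 * 1 = sigma4 by decide, show sigma4 * sigma4 = 1 by decide,
    show sigma4 * (sigma4 * tau4) = tau4 by decide]
  ring

lemma tfun_sK_mul (x : kV4 k) : tfun (sK k * x) = x 1 + x tau4 := by
  simp only [tfun, sK_mul_apply]
  rw [show sigma4 * sigma4 = 1 by decide, show sigma4 * (sigma4 * tau4) = tau4 by decide]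

lemma wfun_sK_mul (x : kV4 k) : wfun (sK k * x) = wfun x := by
  simp only [wfun, sK_mul_apply]
  rw [show sigma4 * (sigma4 * tau4) = tau4 by decide]
  ring

lemma sfun_tK_mul (x : kV4 k) : sfun (tK k * x) = sfun x := by
  simp only [sfun, tK_mul_apply]
  rw [show tau4 * 1 = tau4 by decide, show tau4 * tau4 = 1 by decide,
    show tau4 * sigma4 = sigma4 * tau4 by decide, show tau4 * (sigma4 * tau4) = sigma4 by decide]
  ring

lemma tfun_tK_mul (x : kV4 k) : tfun (tK k * x) = tfun x := by
  simp only [tfun, tK_mul_apply]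
  rw [show tau4 * sigma4 = sigma4 * tau4 by decide, show tau4 * (sigma4 * tau4) = sigma4 by decide]
  ring

lemma wfun_tK_mul (x : kV4 k) : wfun (tK k * x) = x 1 + x sigma4 := by
  simp only [wfun, tK_mul_apply]
  rw [show tau4 * tau4 = 1 by decide, show tau4 * (sigma4 * tau4) = sigma4 by decide]

lemma sfun_smul (c : k) (x : kV4 k) : sfun (c • x) = c * sfun x := by
  simp [sfun, kv4_smul_apply]; ring
lemma tfun_smul (c : k) (x : kV4 k) : tfun (c • x) = c * tfun x := by
  simp [tfun, kv4_smul_apply]; ring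
lemma wfun_smul (c : k) (x : kV4 k) : wfun (c • x) = c * wfun x := by
  simp [wfun, kv4_smul_apply]; ring
lemma qfun_smul (c : k) (x : kV4 k) : qfun (c • x) = c * qfun x := by
  simp [qfun, kv4_smul_apply]

lemma aElt_apply (g : V4) : aElt k g =
    (if sigma4 = g then (1 : k) else 0) + (if 1 = g then (1 : k) else 0) := by
  simp [aElt, MonoidAlgebra.of_apply, MonoidAlgebra.one_def, kv4_add_apply,
    MonoidAlgebra.single_apply, Finsupp.single_apply]

lemma bElt_apply (g : V4) : bElt k g =
    (if tau4 = g then (1 : k) else 0) + (if 1 = g then (1 : k) else 0) := by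
  simp [bElt, MonoidAlgebra.of_apply, MonoidAlgebra.one_def, kv4_add_apply,
    MonoidAlgebra.single_apply, Finsupp.single_apply]

lemma ab_eq : aElt k * bElt k =
    MonoidAlgebra.of k V4 (sigma4 * tau4) + MonoidAlgebra.of k V4 sigma4
      + MonoidAlgebra.of k V4 tau4 + 1 := by
  rw [map_mul]
  show (sK k + 1) * (tK k + 1) = sK k * tK k + sK k + tK k + 1
  ring

lemma ab_apply (g : V4) : (aElt k * bElt k) g =
    (if sigma4 * tau4 = g then (1 : k) else 0) + (if sigma4 = g then (1 : k) else 0)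
      + (if tau4 = g then (1 : k) else 0) + (if 1 = g then (1 : k) else 0) := by
  rw [ab_eq]
  simp [MonoidAlgebra.of_apply, MonoidAlgebra.one_def, kv4_add_apply,
    MonoidAlgebra.single_apply, Finsupp.single_apply]

variable [CharP k 2]

lemma two_eq_zero_k : (2 : k) = 0 := by exact_mod_cast CharP.cast_eq_zero k 2

lemma char2_add_self (x : k) : x + x = 0 := by
  linear_combination x * (two_eq_zero_k (k := k))

/-- Values of the functionals on a combination `p₀ a + p₁ b + q ab`. -/
lemma comb_apply (p₀ p₁ q : k) (g : V4) :
    (p₀ • aElt k + p₁ • bElt k + q • (aElt k * bElt k)) g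
      = p₀ * (aElt k g) + p₁ * (bElt k g) + q * ((aElt k * bElt k) g) := rfl

lemma sfun_comb (p₀ p₁ q : k) :
    sfun (p₀ • aElt k + p₁ • bElt k + q • (aElt k * bElt k)) = 0 := by
  simp only [sfun, comb_apply, aElt_apply, bElt_apply, ab_apply]
  norm_num [show sigma4 ≠ 1 from by decide, show tau4 ≠ 1 from by decide,
    show sigma4 * tau4 ≠ 1 from by decide, show (1 : V4) ≠ sigma4 from by decide,
    show tau4 ≠ sigma4 from by decide, show sigma4 * tau4 ≠ sigma4 from by decide,
    show (1 : V4) ≠ tau4 from by decide, show sigma4 ≠ tau4 from by decide,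
    show sigma4 * tau4 ≠ tau4 from by decide, show (1 : V4) ≠ sigma4 * tau4 from by decide,
    show sigma4 ≠ sigma4 * tau4 from by decide, show tau4 ≠ sigma4 * tau4 from by decide]
  linear_combination (p₀ + p₁ + 2 * q) * (two_eq_zero_k (k := k))

lemma tfun_comb (p₀ p₁ q : k) :
    tfun (p₀ • aElt k + p₁ • bElt k + q • (aElt k * bElt k)) = p₀ := by
  simp only [tfun, comb_apply, aElt_apply, bElt_apply, ab_apply]
  norm_num [show (1 : V4) ≠ sigma4 from by decide,
    show tau4 ≠ sigma4 from by decide, show sigma4 * tau4 ≠ sigma4 from by decide,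
    show sigma4 ≠ sigma4 * tau4 from by decide, show tau4 ≠ sigma4 * tau4 from by decide,
    show (1 : V4) ≠ sigma4 * tau4 from by decide]
  linear_combination q * (two_eq_zero_k (k := k))

lemma wfun_comb (p₀ p₁ q : k) :
    wfun (p₀ • aElt k + p₁ • bElt k + q • (aElt k * bElt k)) = p₁ := by
  simp only [wfun, comb_apply, aElt_apply, bElt_apply, ab_apply]
  norm_num [show (1 : V4) ≠ tau4 from by decide,
    show sigma4 ≠ tau4 from by decide, show sigma4 * tau4 ≠ tau4 from by decide,
    show sigma4 ≠ sigma4 * tau4 from by decide, show tau4 ≠ sigma4 * tau4 from by decide,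
    show (1 : V4) ≠ sigma4 * tau4 from by decide]
  linear_combination q * (two_eq_zero_k (k := k))

lemma qfun_comb (p₀ p₁ q : k) :
    qfun (p₀ • aElt k + p₁ • bElt k + q • (aElt k * bElt k)) = q := by
  simp only [qfun, comb_apply, aElt_apply, bElt_apply, ab_apply]
  norm_num [show sigma4 ≠ sigma4 * tau4 from by decide, show tau4 ≠ sigma4 * tau4 from by decide,
    show (1 : V4) ≠ sigma4 * tau4 from by decide]

/-- Any element with vanishing augmentation is a combination of `a`, `b`, `ab`. -/
lemma decomp (x : kV4 k) (h : sfun x = 0) :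
    tfun x • aElt k + wfun x • bElt k + qfun x • (aElt k * bElt k) = x := by
  have hs : x 1 + x sigma4 + x tau4 + x (sigma4 * tau4) = 0 := h
  ext g
  rw [comb_apply]
  rcases v4_cases g with hg | hg | hg | hg <;> subst hg <;>
      simp only [aElt_apply, bElt_apply, ab_apply, tfun, wfun, qfun] <;>
      norm_num [show sigma4 ≠ 1 from by decide, show tau4 ≠ 1 from by decide,
        show sigma4 * tau4 ≠ 1 from by decide, show (1 : V4) ≠ sigma4 from by decide,
        show tau4 ≠ sigma4 from by decide, show sigma4 * tau4 ≠ sigma4 from by decide,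
        show (1 : V4) ≠ tau4 from by decide, show sigma4 ≠ tau4 from by decide,
        show sigma4 * tau4 ≠ tau4 from by decide, show (1 : V4) ≠ sigma4 * tau4 from by decide,
        show sigma4 ≠ sigma4 * tau4 from by decide, show tau4 ≠ sigma4 * tau4 from by decide]
  · linear_combination hs + (x (sigma4 * tau4) - x 1) * (two_eq_zero_k (k := k))
  · linear_combination (x (sigma4 * tau4)) * (two_eq_zero_k (k := k))
  · linear_combination (x (sigma4 * tau4)) * (two_eq_zero_k (k := k))

/-- Multiplying a combination by `σ`. -/
lemma sK_mul_comb (p₀ p₁ q : k) :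
    sK k * (p₀ • aElt k + p₁ • bElt k + q • (aElt k * bElt k))
      = p₀ • aElt k + p₁ • bElt k + (q + p₁) • (aElt k * bElt k) := by
  rw [mul_add, mul_add, mul_smul_comm, mul_smul_comm, mul_smul_comm,
    sK_mul_a, sK_mul_b, sK_mul_ab]
  module

/-- Multiplying a combination by `τ`. -/
lemma tK_mul_comb (p₀ p₁ q : k) :
    tK k * (p₀ • aElt k + p₁ • bElt k + q • (aElt k * bElt k))
      = p₀ • aElt k + p₁ • bElt k + (q + p₀) • (aElt k * bElt k) := by
  rw [mul_add, mul_add, mul_smul_comm, mul_smul_comm, mul_smul_comm,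
    tK_mul_a, tK_mul_b, tK_mul_ab]
  module

end Functionals

section ModAction

/-- Identity cast `trivMod k → k`. -/
def tv {k : Type} [Field k] (x : trivMod k) : k := x
/-- Identity cast `k → trivMod k`. -/
def vt {k : Type} [Field k] (x : k) : trivMod k := x

variable {k : Type} [Field k] [CharP k 2]

lemma WaMap_apply (n : ℕ) (u : Fin (n + 1) → k) (j : Fin n) : WaMap k n u j = u j.succ := rfl
lemma WbMap_apply (n : ℕ) (u : Fin (n + 1) → k) (j : Fin n) : WbMap k n u j = u j.castSucc := rfl

lemma sK_smul_W (n : ℕ) (x : Wmod k n) :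
    sK k • x = ((x.1, x.2 + WaMap k n x.1) : (Fin (n + 1) → k) × (Fin n → k)) := by
  rw [sK, of_smul_asModule (WRep k n) sigma4 x]
  show WRep k n sigma4 x = _
  exact pairRep_sigma_apply (WaMap k n) (WbMap k n) x

lemma tK_smul_W (n : ℕ) (x : Wmod k n) :
    tK k • x = ((x.1, x.2 + WbMap k n x.1) : (Fin (n + 1) → k) × (Fin n → k)) := by
  rw [tK, of_smul_asModule (WRep k n) tau4 x]
  show WRep k n tau4 x = _
  exact pairRep_tau_apply (WaMap k n) (WbMap k n) x

lemma algebraMap_smul_W (n : ℕ) (c : k) (x : Wmod k n) :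
    algebraMap k (kV4 k) c • x = ((c • x.1, c • x.2) : (Fin (n + 1) → k) × (Fin n → k)) := by
  rw [algebraMap_smul_asModule]
  rfl

lemma sK_smul_triv (x : trivMod k) : sK k • x = x := by
  rw [sK, of_smul_asModule]
  rfl

lemma tK_smul_triv (x : trivMod k) : tK k • x = x := by
  rw [tK, of_smul_asModule]
  rfl

lemma algebraMap_smul_triv (c : k) (x : trivMod k) :
    algebraMap k (kV4 k) c • x = vt (c * tv x) := by
  rw [algebraMap_smul_asModule]
  rfl

lemma smul_kV4 (r x : kV4 k) : r • x = r * x := rfl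

end ModAction

section Maps

variable {k : Type} [Field k] [CharP k 2] {n : ℕ}

/-- The map `W₃^{⊕(n+1)} → k^{⊕n} ⊕ kV₄^{⊕(n+1)}`. -/
noncomputable def fFun (m : Fin (n + 1) → Wmod k 1) :
    (Fin n → trivMod k) × (Fin (n + 1) → kV4 k) :=
  (fun j => vt ((m j.succ).1 0 + (m j.castSucc).1 1),
   fun i => (m i).1 0 • aElt k + (m i).1 1 • bElt k + (m i).2 0 • (aElt k * bElt k))

/-- The map `k^{⊕n} ⊕ kV₄^{⊕(n+1)} → W_{2n+1}`. -/
noncomputable def gFun (x : (Fin n → trivMod k) × (Fin (n + 1) → kV4 k)) : Wmod k n :=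
  ((fun i => sfun (x.2 i),
    fun j => tv (x.1 j) + tfun (x.2 j.succ) + wfun (x.2 j.castSucc)) :
      (Fin (n + 1) → k) × (Fin n → k))

lemma fFun_add (x y : Fin (n + 1) → Wmod k 1) : fFun (x + y) = fFun x + fFun y := by
  refine Prod.ext (funext fun j => ?_) (funext fun i => ?_)
  · show ((x j.succ).1 0 + (y j.succ).1 0) + ((x j.castSucc).1 1 + (y j.castSucc).1 1)
      = ((x j.succ).1 0 + (x j.castSucc).1 1) + ((y j.succ).1 0 + (y j.castSucc).1 1)
    ring
  · show ((x i).1 0 + (y i).1 0) • aElt k + ((x i).1 1 + (y i).1 1) • bElt k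
      + ((x i).2 0 + (y i).2 0) • (aElt k * bElt k)
      = ((x i).1 0 • aElt k + (x i).1 1 • bElt k + (x i).2 0 • (aElt k * bElt k))
        + ((y i).1 0 • aElt k + (y i).1 1 • bElt k + (y i).2 0 • (aElt k * bElt k))
    simp only [add_smul]
    abel

lemma gFun_add (x y : (Fin n → trivMod k) × (Fin (n + 1) → kV4 k)) :
    gFun (x + y) = gFun x + gFun y := by
  refine Prod.ext (funext fun i => ?_) (funext fun j => ?_)
  · show sfun (x.2 i + y.2 i) = sfun (x.2 i) + sfun (y.2 i)
    rw [sfun_add]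
  · show (tv (x.1 j) + tv (y.1 j)) + tfun (x.2 j.succ + y.2 j.succ)
      + wfun (x.2 j.castSucc + y.2 j.castSucc)
      = (tv (x.1 j) + tfun (x.2 j.succ) + wfun (x.2 j.castSucc))
        + (tv (y.1 j) + tfun (y.2 j.succ) + wfun (y.2 j.castSucc))
    rw [tfun_add, wfun_add]
    ring

/-- `f` as a `kV₄`-linear map. -/
noncomputable def fHom :
    (Fin (n + 1) → Wmod k 1) →ₗ[kV4 k] ((Fin n → trivMod k) × (Fin (n + 1) → kV4 k)) :=
  mkHom (AddMonoidHom.mk' fFun fFun_add)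
    (by
      intro c m
      show fFun (algebraMap k (kV4 k) c • m) = algebraMap k (kV4 k) c • fFun m
      refine Prod.ext (funext fun j => ?_) (funext fun i => ?_)
      · show vt (((algebraMap k (kV4 k) c • m) j.succ).1 0
          + ((algebraMap k (kV4 k) c • m) j.castSucc).1 1)
          = algebraMap k (kV4 k) c • ((fFun m).1 j)
        rw [algebraMap_smul_triv, Pi.smul_apply, Pi.smul_apply,
          algebraMap_smul_W, algebraMap_smul_W]
        show c * (m j.succ).1 0 + c * (m j.castSucc).1 1
          = c * ((m j.succ).1 0 + (m j.castSucc).1 1)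
        ring
      · show ((algebraMap k (kV4 k) c • m) i).1 0 • aElt k
          + ((algebraMap k (kV4 k) c • m) i).1 1 • bElt k
          + ((algebraMap k (kV4 k) c • m) i).2 0 • (aElt k * bElt k)
          = algebraMap k (kV4 k) c * ((fFun m).2 i)
        rw [Pi.smul_apply, algebraMap_smul_W, ← Algebra.smul_def]
        show (c * (m i).1 0) • aElt k + (c * (m i).1 1) • bElt k
          + (c * (m i).2 0) • (aElt k * bElt k)
          = c • ((m i).1 0 • aElt k + (m i).1 1 • bElt k + (m i).2 0 • (aElt k * bElt k))
        simp only [smul_add, smul_smul])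
    (by
      intro m
      show fFun (sK k • m) = sK k • fFun m
      refine Prod.ext (funext fun j => ?_) (funext fun i => ?_)
      · show vt (((sK k • m) j.succ).1 0 + ((sK k • m) j.castSucc).1 1)
          = sK k • ((fFun m).1 j)
        rw [sK_smul_triv, Pi.smul_apply, Pi.smul_apply, sK_smul_W, sK_smul_W]
        rfl
      · show ((sK k • m) i).1 0 • aElt k + ((sK k • m) i).1 1 • bElt k
          + ((sK k • m) i).2 0 • (aElt k * bElt k)
          = sK k * ((fFun m).2 i)
        rw [Pi.smul_apply, sK_smul_W]
        show (m i).1 0 • aElt k + (m i).1 1 • bElt k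
          + ((m i).2 0 + (m i).1 1) • (aElt k * bElt k)
          = sK k * ((m i).1 0 • aElt k + (m i).1 1 • bElt k + (m i).2 0 • (aElt k * bElt k))
        rw [sK_mul_comb])
    (by
      intro m
      show fFun (tK k • m) = tK k • fFun m
      refine Prod.ext (funext fun j => ?_) (funext fun i => ?_)
      · show vt (((tK k • m) j.succ).1 0 + ((tK k • m) j.castSucc).1 1)
          = tK k • ((fFun m).1 j)
        rw [tK_smul_triv, Pi.smul_apply, Pi.smul_apply, tK_smul_W, tK_smul_W]
        rfl
      · show ((tK k • m) i).1 0 • aElt k + ((tK k • m) i).1 1 • bElt k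
          + ((tK k • m) i).2 0 • (aElt k * bElt k)
          = tK k * ((fFun m).2 i)
        rw [Pi.smul_apply, tK_smul_W]
        show (m i).1 0 • aElt k + (m i).1 1 • bElt k
          + ((m i).2 0 + (m i).1 0) • (aElt k * bElt k)
          = tK k * ((m i).1 0 • aElt k + (m i).1 1 • bElt k + (m i).2 0 • (aElt k * bElt k))
        rw [tK_mul_comb])

/-- `g` as a `kV₄`-linear map. -/
noncomputable def gHom :
    ((Fin n → trivMod k) × (Fin (n + 1) → kV4 k)) →ₗ[kV4 k] Wmod k n :=
  mkHom (AddMonoidHom.mk' gFun gFun_add)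
    (by
      intro c x
      show gFun (algebraMap k (kV4 k) c • x) = algebraMap k (kV4 k) c • gFun x
      rw [algebraMap_smul_W n c (gFun x)]
      refine Prod.ext (funext fun i => ?_) (funext fun j => ?_)
      · show sfun (algebraMap k (kV4 k) c • x.2 i) = c * sfun (x.2 i)
        rw [smul_kV4, sfun_algebraMap_mul]
      · show tv (algebraMap k (kV4 k) c • x.1 j)
          + tfun (algebraMap k (kV4 k) c • x.2 j.succ)
          + wfun (algebraMap k (kV4 k) c • x.2 j.castSucc)
          = c * (tv (x.1 j) + tfun (x.2 j.succ) + wfun (x.2 j.castSucc))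
        rw [show tv (algebraMap k (kV4 k) c • x.1 j) = c * tv (x.1 j) from by
            rw [algebraMap_smul_triv]; rfl,
          smul_kV4, smul_kV4, tfun_algebraMap_mul, wfun_algebraMap_mul]
        ring)
    (by
      intro x
      show gFun (sK k • x) = sK k • gFun x
      rw [sK_smul_W n (gFun x)]
      refine Prod.ext (funext fun i => ?_) (funext fun j => ?_)
      · show sfun (sK k • x.2 i) = sfun (x.2 i)
        rw [smul_kV4, sfun_sK_mul]
      · show tv (sK k • x.1 j) + tfun (sK k • x.2 j.succ) + wfun (sK k • x.2 j.castSucc)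
          = (tv (x.1 j) + tfun (x.2 j.succ) + wfun (x.2 j.castSucc)) + sfun (x.2 j.succ)
        rw [show tv (sK k • x.1 j) = tv (x.1 j) from congrArg tv (sK_smul_triv (x.1 j)),
          smul_kV4, smul_kV4, tfun_sK_mul, wfun_sK_mul, tfun, sfun, wfun]
        linear_combination (-((x.2 j.succ) sigma4 + (x.2 j.succ) (sigma4 * tau4)))
          * (two_eq_zero_k (k := k)))
    (by
      intro x
      show gFun (tK k • x) = tK k • gFun x
      rw [tK_smul_W n (gFun x)]
      refine Prod.ext (funext fun i => ?_) (funext fun j => ?_)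
      · show sfun (tK k • x.2 i) = sfun (x.2 i)
        rw [smul_kV4, sfun_tK_mul]
      · show tv (tK k • x.1 j) + tfun (tK k • x.2 j.succ) + wfun (tK k • x.2 j.castSucc)
          = (tv (x.1 j) + tfun (x.2 j.succ) + wfun (x.2 j.castSucc)) + sfun (x.2 j.castSucc)
        rw [show tv (tK k • x.1 j) = tv (x.1 j) from congrArg tv (tK_smul_triv (x.1 j)),
          smul_kV4, smul_kV4, tfun_tK_mul, wfun_tK_mul, tfun, sfun, wfun]
        linear_combination (-((x.2 j.castSucc) tau4 + (x.2 j.castSucc) (sigma4 * tau4)))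
          * (two_eq_zero_k (k := k)))

lemma fHom_apply (m : Fin (n + 1) → Wmod k 1) : fHom m = fFun m := rfl
lemma gHom_apply (x : (Fin n → trivMod k) × (Fin (n + 1) → kV4 k)) : gHom x = gFun x := rfl

end Maps

section SESProof

variable {k : Type} [Field k] [CharP k 2] {n : ℕ}

lemma algebraMap_kV4_apply (c : k) (g : V4) :
    (algebraMap k (kV4 k) c) g = if 1 = g then c else 0 :=
  MonoidAlgebra.single_apply

lemma sfun_algebraMap (c : k) : sfun (algebraMap k (kV4 k) c) = c := by
  simp [sfun, algebraMap_kV4_apply, show (1 : V4) ≠ sigma4 from by decide,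
    show (1 : V4) ≠ tau4 from by decide, show (1 : V4) ≠ sigma4 * tau4 from by decide]

lemma tfun_algebraMap (c : k) : tfun (algebraMap k (kV4 k) c) = 0 := by
  simp [tfun, algebraMap_kV4_apply, show (1 : V4) ≠ sigma4 from by decide,
    show (1 : V4) ≠ sigma4 * tau4 from by decide]

lemma wfun_algebraMap (c : k) : wfun (algebraMap k (kV4 k) c) = 0 := by
  simp [wfun, algebraMap_kV4_apply, show (1 : V4) ≠ tau4 from by decide,
    show (1 : V4) ≠ sigma4 * tau4 from by decide]

lemma tfun_zero : tfun (0 : kV4 k) = 0 := by simp [tfun]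
lemma wfun_zero : wfun (0 : kV4 k) = 0 := by simp [wfun]
lemma qfun_zero : qfun (0 : kV4 k) = 0 := by simp [qfun]

lemma fHom_injective : Function.Injective (fHom (k := k) (n := n)) := by
  rw [injective_iff_map_eq_zero]
  intro m h
  funext i
  have hx : (m i).1 0 • aElt k + (m i).1 1 • bElt k + (m i).2 0 • (aElt k * bElt k)
      = (0 : kV4 k) := congrFun (congrArg Prod.snd h) i
  have h0 : (m i).1 0 = 0 := by
    have ht := tfun_comb ((m i).1 0) ((m i).1 1) ((m i).2 0)
    rw [hx, tfun_zero] at ht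
    exact ht.symm
  have h1 : (m i).1 1 = 0 := by
    have ht := wfun_comb ((m i).1 0) ((m i).1 1) ((m i).2 0)
    rw [hx, wfun_zero] at ht
    exact ht.symm
  have h2 : (m i).2 0 = 0 := by
    have ht := qfun_comb ((m i).1 0) ((m i).1 1) ((m i).2 0)
    rw [hx, qfun_zero] at ht
    exact ht.symm
  show m i = ((fun _ => 0, fun _ => 0) : (Fin 2 → k) × (Fin 1 → k))
  refine Prod.ext (funext fun j => ?_) (funext fun j => ?_)
  · revert j
    rw [Fin.forall_fin_two]
    exact ⟨h0, h1⟩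
  · rw [Fin.fin_one_eq_zero j]
    exact h2

lemma gHom_surjective : Function.Surjective (gHom (k := k) (n := n)) := by
  intro w
  refine ⟨((fun j => vt (w.2 j)), fun i => algebraMap k (kV4 k) (w.1 i)), ?_⟩
  show gFun _ = w
  refine Prod.ext (funext fun i => ?_) (funext fun j => ?_)
  · show sfun (algebraMap k (kV4 k) (w.1 i)) = w.1 i
    rw [sfun_algebraMap]
  · show tv (vt (w.2 j)) + tfun (algebraMap k (kV4 k) (w.1 j.succ))
      + wfun (algebraMap k (kV4 k) (w.1 j.castSucc)) = w.2 j
    rw [tfun_algebraMap, wfun_algebraMap]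
    show w.2 j + 0 + 0 = w.2 j
    ring

lemma range_fHom_eq_ker_gHom :
    LinearMap.range (fHom (k := k) (n := n)) = LinearMap.ker gHom := by
  ext z
  simp only [LinearMap.mem_range, LinearMap.mem_ker]
  constructor
  · rintro ⟨m, rfl⟩
    show gFun (fFun m) = 0
    refine Prod.ext (funext fun i => ?_) (funext fun j => ?_)
    · exact sfun_comb ((m i).1 0) ((m i).1 1) ((m i).2 0)
    · show ((m j.succ).1 0 + (m j.castSucc).1 1)
        + tfun ((m j.succ).1 0 • aElt k + (m j.succ).1 1 • bElt k
          + (m j.succ).2 0 • (aElt k * bElt k))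
        + wfun ((m j.castSucc).1 0 • aElt k + (m j.castSucc).1 1 • bElt k
          + (m j.castSucc).2 0 • (aElt k * bElt k)) = 0
      rw [tfun_comb, wfun_comb]
      linear_combination ((m j.succ).1 0 + (m j.castSucc).1 1) * (two_eq_zero_k (k := k))
  · intro hz
    have hs : ∀ i, sfun (z.2 i) = 0 := fun i => congrFun (congrArg Prod.fst hz) i
    have hv : ∀ j : Fin n, tv (z.1 j) + tfun (z.2 j.succ) + wfun (z.2 j.castSucc) = 0 :=
      fun j => congrFun (congrArg Prod.snd hz) j
    refine ⟨fun i => (((fun j2 => if (j2 : ℕ) = 0 then tfun (z.2 i) else wfun (z.2 i)),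
      fun _ => qfun (z.2 i)) : (Fin 2 → k) × (Fin 1 → k)), ?_⟩
    refine Prod.ext (funext fun j => ?_) (funext fun i => ?_)
    · show vt (tfun (z.2 j.succ) + wfun (z.2 j.castSucc)) = z.1 j
      show vt (tfun (z.2 j.succ) + wfun (z.2 j.castSucc)) = vt (tv (z.1 j))
      refine congrArg vt ?_
      linear_combination (hv j) + (-(tv (z.1 j))) * (two_eq_zero_k (k := k))
    · show tfun (z.2 i) • aElt k + wfun (z.2 i) • bElt k + qfun (z.2 i) • (aElt k * bElt k)
        = z.2 i
      exact decomp (z.2 i) (hs i)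

/-- The short exact sequence `0 → W₃^{⊕(n+1)} → k^{⊕n} ⊕ kV₄^{⊕(n+1)} → W_{2n+1} → 0`. -/
lemma ses_exists :
    SES k (Fin (n + 1) → Wmod k 1) ((Fin n → trivMod k) × (Fin (n + 1) → kV4 k)) (Wmod k n) :=
  ⟨fHom, gHom, fHom_injective, gHom_surjective, range_fHom_eq_ker_gHom⟩

end SESProof

/-! ## Permutation module machinery -/

section PermMachinery

variable {k : Type} [Field k]

lemma involHom_pair_sigma {M : Type} [Monoid M] (S T : M) (hS : S * S = 1) (hT : T * T = 1)
    (hC : ∀ (m : Multiplicative (ZMod 2)) (n : Multiplicative (ZMod 2)),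
      Commute (involHom S hS m) (involHom T hT n)) :
    MonoidHom.noncommCoprod (involHom S hS) (involHom T hT) hC sigma4 = S := by
  simp only [MonoidHom.noncommCoprod_apply, sigma4, involHom]
  show (S ^ (toAdd (ofAdd (1 : ZMod 2))).val) * (T ^ (toAdd (1 : Multiplicative (ZMod 2))).val) = _
  norm_num [toAdd_ofAdd, ZMod.val_one]

lemma involHom_pair_tau {M : Type} [Monoid M] (S T : M) (hS : S * S = 1) (hT : T * T = 1)
    (hC : ∀ (m : Multiplicative (ZMod 2)) (n : Multiplicative (ZMod 2)),
      Commute (involHom S hS m) (involHom T hT n)) :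
    MonoidHom.noncommCoprod (involHom S hS) (involHom T hT) hC tau4 = T := by
  simp only [MonoidHom.noncommCoprod_apply, tau4, involHom]
  show (S ^ (toAdd (1 : Multiplicative (ZMod 2))).val) * (T ^ (toAdd (ofAdd (1 : ZMod 2))).val) = _
  norm_num [toAdd_ofAdd, ZMod.val_one]

/-- The homomorphism `V₄ →* Perm ι` determined by two commuting involutive permutations. -/
noncomputable def v4Perm {ι : Type} (p q : Equiv.Perm ι) (hp : p * p = 1) (hq : q * q = 1)
    (hpq : p * q = q * p) : V4 →* Equiv.Perm ι :=
  MonoidHom.noncommCoprod (involHom p hp) (involHom q hq)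
    (fun _ _ => Commute.pow_pow (show Commute p q from hpq) _ _)

lemma v4Perm_sigma {ι : Type} (p q : Equiv.Perm ι) (hp : p * p = 1) (hq : q * q = 1)
    (hpq : p * q = q * p) : v4Perm p q hp hq hpq sigma4 = p :=
  involHom_pair_sigma p q hp hq _

lemma v4Perm_tau {ι : Type} (p q : Equiv.Perm ι) (hp : p * p = 1) (hq : q * q = 1)
    (hpq : p * q = q * p) : v4Perm p q hp hq hpq tau4 = q :=
  involHom_pair_tau p q hp hq _

/-- A module additively isomorphic to `ι → k` such that `σ` and `τ` act by permuting the
canonical basis is a permutation module. -/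
lemma isPermMod_of_perm {ι : Type} [Fintype ι] {M : Type} [AddCommMonoid M]
    [Module (kV4 k) M] (p q : Equiv.Perm ι) (hp : p * p = 1) (hq : q * q = 1)
    (hpq : p * q = q * p) (e : M ≃+ (ι → k))
    (hk : ∀ (c : k) (x : M), e (algebraMap k (kV4 k) c • x) = c • e x)
    (hσ : ∀ (x : M) (i : ι), e (sK k • x) i = e x (p i))
    (hτ : ∀ (x : M) (i : ι), e (tK k • x) i = e x (q i)) :
    IsPermMod k M := by
  letI act : MulAction V4 ι := MulAction.compHom ι (v4Perm p q hp hq hpq)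
  have smul_def : ∀ (g : V4) (i : ι), g • i = v4Perm p q hp hq hpq g i := fun _ _ => rfl
  refine ⟨ι, inferInstance, act, ⟨?_⟩⟩
  let ρ := @Representation.ofMulAction k _ V4 _ ι act
  let F : M → ρ.asModule := fun x => ρ.asModuleEquiv.symm (MonoidAlgebra.ofCoeff (Finsupp.equivFunOnFinite.symm (e x)))
  have hFadd : ∀ x y : M, F (x + y) = F x + F y := by
    intro x y
    show (MonoidAlgebra.ofCoeff (Finsupp.equivFunOnFinite.symm (e (x + y))) : MonoidAlgebra k ι)
      = MonoidAlgebra.ofCoeff (Finsupp.equivFunOnFinite.symm (e x))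
        + MonoidAlgebra.ofCoeff (Finsupp.equivFunOnFinite.symm (e y))
    refine MonoidAlgebra.coeff_injective (Finsupp.ext fun i => ?_)
    simp [map_add, Finsupp.add_apply, MonoidAlgebra.coeff_add, MonoidAlgebra.coeff_ofCoeff]
  have key : ∀ (r : kV4 k) (x : M), F (r • x) = r • F x := by
    intro r x
    refine smul_criterion (M := M) (N := ρ.asModule) (AddMonoidHom.mk' F hFadd) ?_ ?_ ?_ r x
    · intro c x
      show F (algebraMap k (kV4 k) c • x) = algebraMap k (kV4 k) c • F x
      rw [algebraMap_smul_asModule]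
      show (MonoidAlgebra.ofCoeff (Finsupp.equivFunOnFinite.symm (e (algebraMap k (kV4 k) c • x)))
          : MonoidAlgebra k ι)
        = c • MonoidAlgebra.ofCoeff (Finsupp.equivFunOnFinite.symm (e x))
      refine MonoidAlgebra.coeff_injective (Finsupp.ext fun i => ?_)
      rw [hk]
      simp [MonoidAlgebra.coeff_smul, MonoidAlgebra.coeff_ofCoeff]
    · intro x
      show F (MonoidAlgebra.of k V4 sigma4 • x) = MonoidAlgebra.of k V4 sigma4 • F x
      rw [of_smul_asModule]
      show (MonoidAlgebra.ofCoeff (Finsupp.equivFunOnFinite.symm (e (MonoidAlgebra.of k V4 sigma4 • x)))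
          : MonoidAlgebra k ι)
        = Representation.ofMulAction k V4 ι sigma4
          (MonoidAlgebra.ofCoeff (Finsupp.equivFunOnFinite.symm (e x)))
      refine MonoidAlgebra.coeff_injective (Finsupp.ext fun i => ?_)
      rw [Representation.coeff_ofMulAction]
      simp only [MonoidAlgebra.coeff_ofCoeff, Finsupp.coe_equivFunOnFinite_symm]
      rw [show sigma4⁻¹ • i = p i by rw [sigma4_inv, smul_def, v4Perm_sigma]]
      exact hσ x i
    · intro x
      show F (MonoidAlgebra.of k V4 tau4 • x) = MonoidAlgebra.of k V4 tau4 • F x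
      rw [of_smul_asModule]
      show (MonoidAlgebra.ofCoeff (Finsupp.equivFunOnFinite.symm (e (MonoidAlgebra.of k V4 tau4 • x)))
          : MonoidAlgebra k ι)
        = Representation.ofMulAction k V4 ι tau4
          (MonoidAlgebra.ofCoeff (Finsupp.equivFunOnFinite.symm (e x)))
      refine MonoidAlgebra.coeff_injective (Finsupp.ext fun i => ?_)
      rw [Representation.coeff_ofMulAction]
      simp only [MonoidAlgebra.coeff_ofCoeff, Finsupp.coe_equivFunOnFinite_symm]
      rw [show tau4⁻¹ • i = q i by rw [tau4_inv, smul_def, v4Perm_tau]]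
      exact hτ x i
  exact
    { toFun := F
      invFun := fun y => e.symm (Finsupp.equivFunOnFinite (ρ.asModuleEquiv y).coeff)
      left_inv := fun x => by
        show e.symm (Finsupp.equivFunOnFinite (Finsupp.equivFunOnFinite.symm (e x))) = x
        simp
      right_inv := fun y => by
        show (MonoidAlgebra.ofCoeff (Finsupp.equivFunOnFinite.symm
          (e (e.symm (Finsupp.equivFunOnFinite (ρ.asModuleEquiv y).coeff)))) : MonoidAlgebra k ι)
          = ρ.asModuleEquiv y
        simp [MonoidAlgebra.ofCoeff_coeff]
      map_add' := hFadd
      map_smul' := key }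

end PermMachinery

section CMods

variable {k : Type} [Field k]

lemma kleinRep_sigma {V : Type} [AddCommGroup V] [Module k V] (S T : Module.End k V)
    (hS : S * S = 1) (hT : T * T = 1) (hST : S * T = T * S) :
    kleinRep k S T hS hT hST sigma4 = S :=
  involHom_pair_sigma S T hS hT _

lemma kleinRep_tau {V : Type} [AddCommGroup V] [Module k V] (S T : Module.End k V)
    (hS : S * S = 1) (hT : T * T = 1) (hST : S * T = T * S) :
    kleinRep k S T hS hT hST tau4 = T :=
  involHom_pair_tau S T hS hT _

/-- The swap endomorphism of `k²`. -/
noncomputable def swapEnd (k : Type) [Field k] : Module.End k (Fin 2 → k) :=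
  LinearMap.funLeft k k (Equiv.swap 0 1)

lemma swapEnd_sq : swapEnd k * swapEnd k = 1 := by
  apply LinearMap.ext
  intro x
  funext j
  show x (Equiv.swap 0 1 (Equiv.swap 0 1 j)) = x j
  rw [Equiv.swap_apply_self]

/-- The representation `k[V₄/⟨σ⟩]`: `σ` acts trivially, `τ` swaps the basis. -/
noncomputable def CsRep (k : Type) [Field k] : Representation k V4 (Fin 2 → k) :=
  kleinRep k 1 (swapEnd k) (mul_one 1) swapEnd_sq (by rw [one_mul, mul_one])

/-- The representation `k[V₄/⟨τ⟩]`: `τ` acts trivially, `σ` swaps the basis. -/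
noncomputable def CtRep (k : Type) [Field k] : Representation k V4 (Fin 2 → k) :=
  kleinRep k (swapEnd k) 1 swapEnd_sq (mul_one 1) (by rw [one_mul, mul_one])

/-- The permutation module `k[V₄/⟨σ⟩]`. -/
noncomputable def CsMod (k : Type) [Field k] := (CsRep k).asModule
/-- The permutation module `k[V₄/⟨τ⟩]`. -/
noncomputable def CtMod (k : Type) [Field k] := (CtRep k).asModule

noncomputable instance : AddCommGroup (CsMod k) :=
  inferInstanceAs <| AddCommGroup (CsRep k).asModule
noncomputable instance : Module (kV4 k) (CsMod k) :=
  inferInstanceAs <| Module (kV4 k) (CsRep k).asModule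
noncomputable instance : AddCommGroup (CtMod k) :=
  inferInstanceAs <| AddCommGroup (CtRep k).asModule
noncomputable instance : Module (kV4 k) (CtMod k) :=
  inferInstanceAs <| Module (kV4 k) (CtRep k).asModule

lemma sK_smul_Cs (x : CsMod k) : sK k • x = x := by
  refine (of_smul_asModule (CsRep k) sigma4 x).trans ?_
  rw [show CsRep k sigma4 = 1 from kleinRep_sigma _ _ _ _ _]
  rfl

lemma tK_smul_Cs (x : CsMod k) :
    tK k • x = ((fun j => x (Equiv.swap 0 1 j)) : Fin 2 → k) := by
  refine (of_smul_asModule (CsRep k) tau4 x).trans ?_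
  rw [show CsRep k tau4 = swapEnd k from kleinRep_tau _ _ _ _ _]
  rfl

lemma sK_smul_Ct (x : CtMod k) :
    sK k • x = ((fun j => x (Equiv.swap 0 1 j)) : Fin 2 → k) := by
  refine (of_smul_asModule (CtRep k) sigma4 x).trans ?_
  rw [show CtRep k sigma4 = swapEnd k from kleinRep_sigma _ _ _ _ _]
  rfl

lemma tK_smul_Ct (x : CtMod k) : tK k • x = x := by
  refine (of_smul_asModule (CtRep k) tau4 x).trans ?_
  rw [show CtRep k tau4 = 1 from kleinRep_tau _ _ _ _ _]
  rfl

lemma algebraMap_smul_Cs (c : k) (x : CsMod k) :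
    algebraMap k (kV4 k) c • x = ((fun j => c * x j) : Fin 2 → k) := by
  refine (algebraMap_smul_asModule (CsRep k) c x).trans ?_
  rfl

lemma algebraMap_smul_Ct (c : k) (x : CtMod k) :
    algebraMap k (kV4 k) c • x = ((fun j => c * x j) : Fin 2 → k) := by
  refine (algebraMap_smul_asModule (CtRep k) c x).trans ?_
  rfl

end CMods

section PermInstances

variable {k : Type} [Field k] [CharP k 2]

/-- An involutive function as a permutation. -/
def involEquiv {α : Type} (f : α → α) (h : ∀ x, f (f x) = x) : Equiv.Perm α :=
  ⟨f, f, h, h⟩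

lemma involEquiv_apply {α : Type} (f : α → α) (h : ∀ x, f (f x) = x) (x : α) :
    involEquiv f h x = f x := rfl

lemma involEquiv_sq {α : Type} (f : α → α) (h : ∀ x, f (f x) = x) :
    involEquiv f h * involEquiv f h = 1 :=
  Equiv.ext h

lemma isPermMod_pi_triv (m : ℕ) : IsPermMod k (Fin m → trivMod k) := by
  refine isPermMod_of_perm (ι := Fin m) 1 1 (one_mul 1) (one_mul 1) rfl
    (AddEquiv.mk' (Equiv.mk (fun z i => tv (z i)) (fun w i => vt (w i))
      (fun z => rfl) (fun w => rfl)) (fun z y => rfl)) ?_ ?_ ?_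
  · intro c z
    funext i
    show tv (algebraMap k (kV4 k) c • z i) = c * tv (z i)
    rw [algebraMap_smul_triv]
    rfl
  · intro z i
    show tv (sK k • z i) = tv (z i)
    rw [sK_smul_triv]
  · intro z i
    show tv (tK k • z i) = tv (z i)
    rw [tK_smul_triv]

lemma isPermMod_punit : IsPermMod k PUnit := by
  refine isPermMod_of_perm (ι := PEmpty) 1 1 (one_mul 1) (one_mul 1) rfl
    ⟨⟨fun _ => (fun i => i.elim), fun _ => PUnit.unit, fun x => rfl,
      fun w => funext fun i => i.elim⟩, fun x y => funext fun i => i.elim⟩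
    (fun c x => funext fun i => i.elim) (fun x i => i.elim) (fun x i => i.elim)

/-- `P₀` is a permutation module. -/
lemma isPermMod_P0 (m l : ℕ) : IsPermMod k ((Fin m → trivMod k) × (Fin l → kV4 k)) := by
  refine isPermMod_of_perm (ι := Sum (Fin m) (Fin l × V4))
    (involEquiv (Sum.map id (fun p => (p.1, sigma4 * p.2)))
      (by rintro (j | ⟨i, h⟩) <;> simp [← mul_assoc, sigma4_sq]))
    (involEquiv (Sum.map id (fun p => (p.1, tau4 * p.2)))
      (by rintro (j | ⟨i, h⟩) <;> simp [← mul_assoc, tau4_sq]))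
    (involEquiv_sq _ _) (involEquiv_sq _ _)
    (by
      apply Equiv.ext
      rintro (j | ⟨i, h⟩) <;>
        simp [involEquiv, Sum.map, ← mul_assoc,
          show sigma4 * tau4 = tau4 * sigma4 from by decide])
    ⟨⟨fun z => Sum.elim (fun j => tv (z.1 j)) (fun p => z.2 p.1 p.2),
      fun w => (fun j => vt (w (Sum.inl j)),
        fun i => MonoidAlgebra.ofCoeff (Finsupp.equivFunOnFinite.symm (fun g => w (Sum.inr (i, g))))),
      fun z => by
        refine Prod.ext (funext fun j => rfl) (funext fun i => ?_)
        exact congrArg MonoidAlgebra.ofCoeff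
          (Equiv.symm_apply_apply Finsupp.equivFunOnFinite (z.2 i).coeff),
      fun w => by
        funext x
        rcases x with j | ⟨i, g⟩
        · rfl
        · simp⟩,
      fun z y => by
        funext x
        rcases x with j | ⟨i, g⟩ <;> rfl⟩
    ?_ ?_ ?_
  · intro c z
    funext x
    rcases x with j | ⟨i, g⟩
    · show tv (algebraMap k (kV4 k) c • z.1 j) = c * tv (z.1 j)
      rw [algebraMap_smul_triv]
      rfl
    · show (algebraMap k (kV4 k) c • z.2 i) g = c * z.2 i g
      rw [smul_kV4, algebraMap_mul_apply]
  · intro z x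
    rcases x with j | ⟨i, g⟩
    · show tv (sK k • z.1 j) = tv (z.1 j)
      rw [sK_smul_triv]
    · show (sK k • z.2 i) g = z.2 i (sigma4 * g)
      rw [smul_kV4, sK_mul_apply]
  · intro z x
    rcases x with j | ⟨i, g⟩
    · show tv (tK k • z.1 j) = tv (z.1 j)
      rw [tK_smul_triv]
    · show (tK k • z.2 i) g = z.2 i (tau4 * g)
      rw [smul_kV4, tK_mul_apply]

/-- `P₁` is a permutation module. -/
lemma isPermMod_P1 (m : ℕ) : IsPermMod k (Fin m → (CsMod k × CtMod k)) := by
  refine isPermMod_of_perm (ι := Fin m × (Sum (Fin 2) (Fin 2)))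
    (involEquiv (fun x => (x.1, Sum.map id (Equiv.swap 0 1) x.2))
      (by rintro ⟨i, j | j⟩ <;> simp [Equiv.swap_apply_self]))
    (involEquiv (fun x => (x.1, Sum.map (Equiv.swap 0 1) id x.2))
      (by rintro ⟨i, j | j⟩ <;> simp [Equiv.swap_apply_self]))
    (involEquiv_sq _ _) (involEquiv_sq _ _)
    (by
      apply Equiv.ext
      rintro ⟨i, j | j⟩ <;> simp [involEquiv, Sum.map])
    ⟨⟨fun z x => Sum.elim (fun j => (z x.1).1 j) (fun j => (z x.1).2 j) x.2,
      fun w i => ((fun j => w (i, Sum.inl j)), (fun j => w (i, Sum.inr j))),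
      fun z => by
        funext i
        exact Prod.ext rfl rfl,
      fun w => by
        funext x
        rcases x with ⟨i, j | j⟩ <;> rfl⟩,
      fun z y => by
        funext x
        rcases x with ⟨i, j | j⟩ <;> rfl⟩
    ?_ ?_ ?_
  · intro c z
    funext x
    rcases x with ⟨i, j | j⟩
    · show (algebraMap k (kV4 k) c • (z i).1) j = c * (z i).1 j
      rw [algebraMap_smul_Cs]
    · show (algebraMap k (kV4 k) c • (z i).2) j = c * (z i).2 j
      rw [algebraMap_smul_Ct]
  · intro z x
    rcases x with ⟨i, j | j⟩
    · show (sK k • (z i).1) j = (z i).1 j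
      rw [sK_smul_Cs]
    · show (sK k • (z i).2) j = (z i).2 (Equiv.swap 0 1 j)
      rw [sK_smul_Ct]
  · intro z x
    rcases x with ⟨i, j | j⟩
    · show (tK k • (z i).1) j = (z i).1 (Equiv.swap 0 1 j)
      rw [tK_smul_Cs]
    · show (tK k • (z i).2) j = (z i).2 j
      rw [tK_smul_Ct]

end PermInstances

section Resolution

variable {k : Type} [Field k] [CharP k 2] {n : ℕ}

/-- The per-copy map `k[V₄/⟨σ⟩] ⊕ k[V₄/⟨τ⟩] → W₃`. -/
noncomputable def hFun (x : CsMod k × CtMod k) : Wmod k 1 :=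
  (((fun j2 => if (j2 : ℕ) = 0 then x.1 0 + x.1 1 else x.2 0 + x.2 1),
    fun _ => x.1 1 + x.2 1) : (Fin 2 → k) × (Fin 1 → k))

/-- The map `P₁ → W₃^{⊕(n+1)}`. -/
noncomputable def hBigHom :
    (Fin (n + 1) → (CsMod k × CtMod k)) →ₗ[kV4 k] (Fin (n + 1) → Wmod k 1) :=
  mkHom (AddMonoidHom.mk' (fun z => fun i => hFun (z i))
    (by
      intro z y
      funext i
      refine Prod.ext (funext fun j2 => ?_) (funext fun j2 => ?_)
      · show (if (j2 : ℕ) = 0 then ((z i).1 0 + (y i).1 0) + ((z i).1 1 + (y i).1 1)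
          else ((z i).2 0 + (y i).2 0) + ((z i).2 1 + (y i).2 1))
          = (if (j2 : ℕ) = 0 then (z i).1 0 + (z i).1 1 else (z i).2 0 + (z i).2 1)
            + (if (j2 : ℕ) = 0 then (y i).1 0 + (y i).1 1 else (y i).2 0 + (y i).2 1)
        by_cases h : (j2 : ℕ) = 0 <;> simp only [if_pos, if_neg, h, if_true, if_false] <;> ring
      · show ((z i).1 1 + (y i).1 1) + ((z i).2 1 + (y i).2 1)
          = ((z i).1 1 + (z i).2 1) + ((y i).1 1 + (y i).2 1)
        ring))
    (by
      intro c z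
      funext i
      show hFun (algebraMap k (kV4 k) c • z i) = algebraMap k (kV4 k) c • hFun (z i)
      rw [algebraMap_smul_W 1 c (hFun (z i))]
      refine Prod.ext (funext fun j2 => ?_) (funext fun j2 => ?_)
      · show (if (j2 : ℕ) = 0
          then (algebraMap k (kV4 k) c • (z i).1) 0 + (algebraMap k (kV4 k) c • (z i).1) 1
          else (algebraMap k (kV4 k) c • (z i).2) 0 + (algebraMap k (kV4 k) c • (z i).2) 1)
          = c * (if (j2 : ℕ) = 0 then (z i).1 0 + (z i).1 1 else (z i).2 0 + (z i).2 1)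
        rw [algebraMap_smul_Cs, algebraMap_smul_Ct]
        by_cases h : (j2 : ℕ) = 0 <;> simp only [if_pos, if_neg, h, if_true, if_false] <;> ring
      · show (algebraMap k (kV4 k) c • (z i).1) 1 + (algebraMap k (kV4 k) c • (z i).2) 1
          = c * ((z i).1 1 + (z i).2 1)
        rw [algebraMap_smul_Cs, algebraMap_smul_Ct]
        show c * (z i).1 1 + c * (z i).2 1 = _
        ring)
    (by
      intro z
      funext i
      show hFun (sK k • z i) = sK k • hFun (z i)
      rw [sK_smul_W 1 (hFun (z i))]
      refine Prod.ext (funext fun j2 => ?_) (funext fun j2 => ?_)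
      · show (if (j2 : ℕ) = 0
          then (sK k • (z i).1) 0 + (sK k • (z i).1) 1
          else (sK k • (z i).2) 0 + (sK k • (z i).2) 1)
          = (if (j2 : ℕ) = 0 then (z i).1 0 + (z i).1 1 else (z i).2 0 + (z i).2 1)
        rw [sK_smul_Cs, sK_smul_Ct]
        by_cases h : (j2 : ℕ) = 0
        · rw [if_pos h, if_pos h]
        · rw [if_neg h, if_neg h]
          show (z i).2 (Equiv.swap 0 1 0) + (z i).2 (Equiv.swap 0 1 1) = _
          rw [Equiv.swap_apply_left, Equiv.swap_apply_right]
          ring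
      · rw [Fin.fin_one_eq_zero j2]
        show (sK k • (z i).1) 1 + (sK k • (z i).2) 1
          = (hFun (z i)).2 0 + WaMap k 1 (hFun (z i)).1 0
        rw [sK_smul_Cs, sK_smul_Ct]
        show (z i).1 1 + (z i).2 (Equiv.swap 0 1 1)
          = ((z i).1 1 + (z i).2 1) + ((z i).2 0 + (z i).2 1)
        rw [Equiv.swap_apply_right]
        linear_combination (-(z i).2 1) * (two_eq_zero_k (k := k)))
    (by
      intro z
      funext i
      show hFun (tK k • z i) = tK k • hFun (z i)
      rw [tK_smul_W 1 (hFun (z i))]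
      refine Prod.ext (funext fun j2 => ?_) (funext fun j2 => ?_)
      · show (if (j2 : ℕ) = 0
          then (tK k • (z i).1) 0 + (tK k • (z i).1) 1
          else (tK k • (z i).2) 0 + (tK k • (z i).2) 1)
          = (if (j2 : ℕ) = 0 then (z i).1 0 + (z i).1 1 else (z i).2 0 + (z i).2 1)
        rw [tK_smul_Cs, tK_smul_Ct]
        by_cases h : (j2 : ℕ) = 0
        · rw [if_pos h, if_pos h]
          show (z i).1 (Equiv.swap 0 1 0) + (z i).1 (Equiv.swap 0 1 1) = _
          rw [Equiv.swap_apply_left, Equiv.swap_apply_right]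
          ring
        · rw [if_neg h, if_neg h]
      · rw [Fin.fin_one_eq_zero j2]
        show (tK k • (z i).1) 1 + (tK k • (z i).2) 1
          = (hFun (z i)).2 0 + WbMap k 1 (hFun (z i)).1 0
        rw [tK_smul_Cs, tK_smul_Ct]
        show (z i).1 (Equiv.swap 0 1 1) + (z i).2 1
          = ((z i).1 1 + (z i).2 1) + ((z i).1 0 + (z i).1 1)
        rw [Equiv.swap_apply_right]
        linear_combination (-(z i).1 1) * (two_eq_zero_k (k := k)))

/-- The differential `d₀ : P₁ → P₀`. -/
noncomputable def d0Hom :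
    (Fin (n + 1) → (CsMod k × CtMod k)) →ₗ[kV4 k]
      ((Fin n → trivMod k) × (Fin (n + 1) → kV4 k)) :=
  fHom.comp hBigHom

/-- The generator image for `d₁`. -/
noncomputable def d1copy (k : Type) [Field k] (t : k) : CsMod k × CtMod k :=
  (((fun _ => t) : Fin 2 → k), ((fun _ => t) : Fin 2 → k))

lemma sK_smul_d1copy (t : k) : sK k • d1copy k t = d1copy k t := by
  refine Prod.ext ?_ ?_
  · show sK k • (d1copy k t).1 = _
    exact sK_smul_Cs (k := k) ((fun _ => t : Fin 2 → k) : CsMod k)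
  · show sK k • (d1copy k t).2 = _
    exact sK_smul_Ct (k := k) ((fun _ => t : Fin 2 → k) : CtMod k)

lemma tK_smul_d1copy (t : k) : tK k • d1copy k t = d1copy k t := by
  refine Prod.ext ?_ ?_
  · show tK k • (d1copy k t).1 = _
    exact tK_smul_Cs (k := k) ((fun _ => t : Fin 2 → k) : CsMod k)
  · show tK k • (d1copy k t).2 = _
    exact tK_smul_Ct (k := k) ((fun _ => t : Fin 2 → k) : CtMod k)

lemma algebraMap_smul_d1copy (c t : k) :
    algebraMap k (kV4 k) c • d1copy k t = d1copy k (c * t) := by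
  refine Prod.ext ?_ ?_
  · show algebraMap k (kV4 k) c • (d1copy k t).1 = _
    refine (algebraMap_smul_Cs c ((fun _ => t : Fin 2 → k) : CsMod k)).trans ?_
    rfl
  · show algebraMap k (kV4 k) c • (d1copy k t).2 = _
    refine (algebraMap_smul_Ct c ((fun _ => t : Fin 2 → k) : CtMod k)).trans ?_
    rfl

/-- The differential `d₁ : P₂ → P₁`. -/
noncomputable def d1Hom :
    (Fin (n + 1) → trivMod k) →ₗ[kV4 k] (Fin (n + 1) → (CsMod k × CtMod k)) :=
  mkHom (AddMonoidHom.mk' (fun c => fun i => d1copy k (tv (c i)))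
    (fun c c' => funext fun i => Prod.ext (funext fun _ => rfl) (funext fun _ => rfl)))
    (by
      intro c' c
      funext i
      show d1copy k (tv (algebraMap k (kV4 k) c' • c i))
        = algebraMap k (kV4 k) c' • d1copy k (tv (c i))
      rw [algebraMap_smul_d1copy]
      congr 1
      rw [algebraMap_smul_triv]
      rfl)
    (by
      intro c
      funext i
      show d1copy k (tv (sK k • c i)) = sK k • d1copy k (tv (c i))
      rw [sK_smul_d1copy, sK_smul_triv])
    (by
      intro c
      funext i
      show d1copy k (tv (tK k • c i)) = tK k • d1copy k (tv (c i))
      rw [tK_smul_d1copy, tK_smul_triv])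

lemma hBigHom_surjective : Function.Surjective (hBigHom (k := k) (n := n)) := by
  intro w
  refine ⟨fun i => (((fun j2 => if (j2 : ℕ) = 0 then (w i).1 0 + (w i).2 0 else (w i).2 0)
      : CsMod k),
    ((fun j2 => if (j2 : ℕ) = 0 then (w i).1 1 else 0) : CtMod k)), ?_⟩
  funext i
  refine Prod.ext (funext fun j2 => ?_) (funext fun j2 => ?_)
  · show (if (j2 : ℕ) = 0
      then ((w i).1 0 + (w i).2 0) + (w i).2 0
      else (w i).1 1 + 0) = (w i).1 j2
    by_cases h : (j2 : ℕ) = 0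
    · rw [if_pos h]
      have hj : j2 = 0 := Fin.ext (by simpa using h)
      rw [hj]
      linear_combination ((w i).2 0) * (two_eq_zero_k (k := k))
    · rw [if_neg h]
      have hj : j2 = 1 := Fin.ext (by have := j2.isLt; simp only [Fin.val_one]; omega)
      rw [hj, add_zero]
  · show (w i).2 0 + 0 = (w i).2 j2
    rw [Fin.fin_one_eq_zero j2, add_zero]

lemma ker_gHom_eq_range_d0 :
    LinearMap.ker (gHom (k := k) (n := n)) = LinearMap.range d0Hom := by
  rw [d0Hom, LinearMap.range_comp_of_range_eq_top fHom
    (LinearMap.range_eq_top.mpr hBigHom_surjective), range_fHom_eq_ker_gHom]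

lemma ker_d0_eq_range_d1 :
    LinearMap.ker (d0Hom (k := k) (n := n)) = LinearMap.range d1Hom := by
  ext z
  simp only [LinearMap.mem_ker, LinearMap.mem_range]
  constructor
  · intro hz
    have hB : hBigHom z = 0 := fHom_injective (by rw [map_zero]; exact hz)
    have hcomp : ∀ i, hFun (z i) = (0 : Wmod k 1) := fun i => congrFun hB i
    have h1 : ∀ i, (z i).1 0 + (z i).1 1 = 0 := fun i =>
      congrFun (congrArg Prod.fst (hcomp i)) 0
    have h2 : ∀ i, (z i).2 0 + (z i).2 1 = 0 := fun i =>
      congrFun (congrArg Prod.fst (hcomp i)) 1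
    have h3 : ∀ i, (z i).1 1 + (z i).2 1 = 0 := fun i =>
      congrFun (congrArg Prod.snd (hcomp i)) 0
    refine ⟨fun i => vt ((z i).1 0), ?_⟩
    have e1 : ∀ i, (z i).1 1 = (z i).1 0 := fun i => by
      linear_combination (h1 i) + (-(z i).1 0) * (two_eq_zero_k (k := k))
    have e3 : ∀ i, (z i).2 1 = (z i).1 0 := fun i => by
      linear_combination (h3 i) - (e1 i) + (-(z i).1 0) * (two_eq_zero_k (k := k))
    have e2 : ∀ i, (z i).2 0 = (z i).1 0 := fun i => by
      linear_combination (h2 i) - (e3 i) + (-(z i).1 0) * (two_eq_zero_k (k := k))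
    funext i
    refine Prod.ext (funext fun j2 => ?_) (funext fun j2 => ?_)
    · show (z i).1 0 = (z i).1 j2
      revert j2
      rw [Fin.forall_fin_two]
      exact ⟨rfl, (e1 i).symm⟩
    · show (z i).1 0 = (z i).2 j2
      revert j2
      rw [Fin.forall_fin_two]
      exact ⟨(e2 i).symm, (e3 i).symm⟩
  · rintro ⟨c, rfl⟩
    show fHom (hBigHom (d1Hom c)) = 0
    have : hBigHom (d1Hom c) = 0 := by
      funext i
      refine Prod.ext (funext fun j2 => ?_) (funext fun j2 => ?_)
      · show (if (j2 : ℕ) = 0 then tv (c i) + tv (c i) else tv (c i) + tv (c i))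
          = (0 : k)
        rw [ite_self]
        exact char2_add_self _
      · show tv (c i) + tv (c i) = (0 : k)
        exact char2_add_self _
    rw [this, map_zero]

lemma ker_d1_eq_bot : LinearMap.ker (d1Hom (k := k) (n := n)) = ⊥ := by
  rw [LinearMap.ker_eq_bot']
  intro c hc
  funext i
  have : tv (c i) = 0 := congrFun (congrArg Prod.fst (congrFun hc i)) 0
  exact this

lemma submodule_punit_eq (N₁ N₂ : Submodule (kV4 k) PUnit) : N₁ = N₂ := by
  ext x
  have hx : x = 0 := Subsingleton.elim x 0
  subst hx
  exact ⟨fun _ => N₂.zero_mem, fun _ => N₁.zero_mem⟩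

end Resolution

/-- The explicit permutation resolution of `W_{2n+1}` of length `2`. -/
noncomputable def wPermRes (k : Type) [Field k] [CharP k 2] (n : ℕ) :
    PermRes k (Wmod k n) 2 where
  P := fun i => match i with
    | 0 => (Fin n → trivMod k) × (Fin (n + 1) → kV4 k)
    | 1 => Fin (n + 1) → (CsMod k × CtMod k)
    | 2 => Fin (n + 1) → trivMod k
    | _ + 3 => PUnit
  acm := fun i => match i with
    | 0 => inferInstance
    | 1 => inferInstance
    | 2 => inferInstance
    | _ + 3 => inferInstance
  mod := fun i => match i with
    | 0 => inferInstance
    | 1 => inferInstance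
    | 2 => inferInstance
    | _ + 3 => inferInstance
  d := fun i => match i with
    | 0 => d0Hom
    | 1 => d1Hom
    | 2 => 0
    | _ + 3 => 0
  ε := gHom
  perm := fun i => match i with
    | 0 => isPermMod_P0 n (n + 1)
    | 1 => isPermMod_P1 (n + 1)
    | 2 => isPermMod_pi_triv (n + 1)
    | _ + 3 => isPermMod_punit
  surj := gHom_surjective
  exact_zero := ker_gHom_eq_range_d0
  exact_succ := fun i => match i with
    | 0 => ker_d0_eq_range_d1
    | 1 => by rw [ker_d1_eq_bot]; exact LinearMap.range_zero.symm
    | _ + 2 => submodule_punit_eq _ _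
  bounded := fun i hi x => by
    obtain ⟨j, rfl⟩ : ∃ j, i = j + 3 := ⟨i - 3, by omega⟩
    exact Subsingleton.elim x 0

/-! ## Statement -/

-- STATEMENT 13
theorem stmt13 (k : Type) [Field k] [CharP k 2] (n : ℕ) (hn : 3 ≤ n) :
    SES k (Fin (n + 1) → Wmod k 1) ((Fin n → trivMod k) × (Fin (n + 1) → kV4 k)) (Wmod k n) ∧
    ppdim k (Wmod k n) ≤ 2 :=
  ⟨ses_exists, Nat.sInf_le ⟨wPermRes k n⟩⟩
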